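/- Let q̃ be a finite-dimensional Lie algebra over a field k of characteristic 0 and let q be a Lie ideal of q̃, regarded as a q̃-module via the adjoint action. Then ind q + ind q̃ ≤ dim(q̃/q) + 2·ind(q̃, q). -/

import Mathlib

open Module

section Defs

variable (k : Type*) [Field k]

/-- The stabiliser `q_ξ = {x ∈ q | ξ ⁅x, y⁆ = 0 for all y}` of a linear form `ξ ∈ q*`. -/
def lieStab (q : Type*) [LieRing q] [LieAlgebra k q] (ξ : Module.Dual k q) :
    Submodule k q where
  carrier := {x : q | ∀ y : q, ξ ⁅x, y⁆ = 0}
  add_mem' := by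
    intro a b ha hb y
    rw [add_lie, map_add, ha y, hb y, add_zero]
  zero_mem' := by
    intro y
    rw [zero_lie, map_zero]
  smul_mem' := by
    intro c a ha y
    rw [smul_lie, map_smul, ha y, smul_zero]

/-- The index of a Lie algebra: the minimal dimension of the stabiliser of a linear form. -/
noncomputable def lieIndex (q : Type*) [LieRing q] [LieAlgebra k q] : ℕ :=
  ⨅ ξ : Module.Dual k q, Module.finrank k ↥(lieStab k q ξ)

/-- The index of a representation `ρ : q → End V`, namely
`dim V - max over ξ ∈ V* of dim (q · ξ)`, where `q · ξ = {v ↦ ξ (ρ s v) : s ∈ q} ⊆ V*`. -/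
noncomputable def lieRepIndex {q V : Type*} [AddCommGroup q] [Module k q]
    [AddCommGroup V] [Module k V] (ρ : q →ₗ[k] Module.End k V) : ℕ :=
  Module.finrank k V -
    ⨆ ξ : Module.Dual k V,
      Module.finrank k ↥(LinearMap.range ((LinearMap.llcomp k V V k ξ) ∘ₗ ρ))

end Defs

theorem lieIndex_ideal_add_lieIndex_le
    (k : Type*) [Field k] [CharZero k]
    (Q : Type*) [LieRing Q] [LieAlgebra k Q] [FiniteDimensional k Q]
    (I : LieIdeal k Q) :
    lieIndex k ↥I + lieIndex k Q ≤
      Module.finrank k (Q ⧸ I) +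
        2 * lieRepIndex k (LieModule.toEnd k Q ↥I : Q →ₗ[k] Module.End k ↥I) := by
  classical
  haveI : FiniteDimensional k ↥I := inferInstanceAs (FiniteDimensional k I.toSubmodule)
  set n := finrank k Q with hn
  set m := finrank k ↥I with hm
  set ρ := (LieModule.toEnd k Q ↥I : Q →ₗ[k] Module.End k ↥I) with hρ
  set f : Module.Dual k ↥I → ℕ := fun ξ =>
    finrank k ↥(LinearMap.range ((LinearMap.llcomp k ↥I ↥I k ξ) ∘ₗ ρ)) with hf
  -- the sup is attained
  have hdual : finrank k (Module.Dual k ↥I) = m := Subspace.dual_finrank_eq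
  have hbdd : ∀ ξ, f ξ ≤ m := fun ξ => (Submodule.finrank_le _).trans_eq hdual
  have hBdd : BddAbove (Set.range f) := ⟨m, by rintro x ⟨ξ, rfl⟩; exact hbdd ξ⟩
  have hach : (⨆ ξ, f ξ) ∈ Set.range f := Nat.sSup_mem (Set.range_nonempty f) hBdd
  obtain ⟨ξ₀, hξ₀⟩ := hach
  set c := ⨆ ξ, f ξ with hc
  -- extend ξ₀ to Q
  set ι : ↥I →ₗ[k] Q := I.toSubmodule.subtype with hι
  obtain ⟨g, hg⟩ := ι.exists_leftInverse_of_injective (Submodule.ker_subtype _)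
  set ξt : Module.Dual k Q := ξ₀ ∘ₗ g with hξt
  have hres : ∀ v : ↥I, ξt (v : Q) = ξ₀ v := by
    intro v
    have := LinearMap.congr_fun hg v
    simp only [LinearMap.comp_apply, LinearMap.id_apply] at this ⊢
    rw [hξt]
    simp only [LinearMap.comp_apply]
    rw [show ι v = (v : Q) from rfl] at this
    rw [this]
  -- the two key maps
  set φ : Q →ₗ[k] Module.Dual k Q :=
    (LinearMap.llcomp k Q Q k ξt) ∘ₗ (LieAlgebra.ad k Q : Q →ₗ[k] Module.End k Q) with hφ
  set ψ : Q →ₗ[k] Module.Dual k ↥I := (LinearMap.llcomp k ↥I ↥I k ξ₀) ∘ₗ ρ with hψ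
  have hφ' : ∀ x y : Q, φ x y = ξt ⁅x, y⁆ := by intro x y; simp [hφ]
  have hψ' : ∀ (s : Q) (v : ↥I), ψ s v = ξt ⁅s, (v : Q)⁆ := by
    intro s v
    have : ψ s v = ξ₀ (⁅s, v⁆ : ↥I) := by simp [hψ, ρ]
    rw [this, ← hres ⁅s, v⁆]
    rfl
  set K := LinearMap.ker φ with hK
  set P := LinearMap.ker ψ with hP
  set T := Submodule.comap ι K with hT
  set S := lieStab k ↥I ξ₀ with hS
  -- K ≤ P
  have hKP : K ≤ P := by
    intro x hx
    simp only [hP, LinearMap.mem_ker]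
    ext v
    rw [hψ' x v]
    have : φ x = 0 := hx
    have := LinearMap.congr_fun this (v : Q)
    rw [hφ' x (v : Q)] at this
    simpa using this
  -- stabilizer identifications
  have hstabQ : lieStab k Q ξt = K := by
    ext x
    constructor
    · intro hx
      simp only [hK, LinearMap.mem_ker]
      ext y
      rw [hφ' x y]
      exact hx y
    · intro hx y
      have := LinearMap.congr_fun (show φ x = 0 from hx) y
      rw [hφ' x y] at this
      simpa using this
  have hstabI : S = Submodule.comap ι P := by
    ext x
    constructor
    · intro hx
      simp only [Submodule.mem_comap, hP, LinearMap.mem_ker]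
      ext v
      rw [hψ' (ι x) v]
      have h := hx v
      have hcoe : (↑(⁅x, v⁆ : ↥I) : Q) = ⁅(x : Q), (v : Q)⁆ := rfl
      rw [← hres ⁅x, v⁆] at h
      rw [show ι x = (x : Q) from rfl]
      rw [← hcoe]
      simpa using h
    · intro hx v
      simp only [Submodule.mem_comap, hP, LinearMap.mem_ker] at hx
      have := LinearMap.congr_fun hx v
      rw [hψ' (ι x) v] at this
      rw [← hres ⁅x, v⁆]
      have hcoe : (↑(⁅x, v⁆ : ↥I) : Q) = ⁅(x : Q), (v : Q)⁆ := rfl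
      rw [show ι x = (x : Q) from rfl] at this
      simpa [hcoe] using this
  -- (A) lieIndex bounds
  have hA : lieIndex k Q ≤ finrank k K := by
    have := ciInf_le (OrderBot.bddBelow _) ξt
      (f := fun ξ : Module.Dual k Q => finrank k ↥(lieStab k Q ξ))
    rw [hstabQ] at this
    exact this
  have hB : lieIndex k ↥I ≤ finrank k S := ciInf_le (OrderBot.bddBelow _) ξ₀
  -- (C) finrank S ≤ finrank T + finrank (map K.mkQ P)
  set P' := Submodule.map K.mkQ P with hP'
  have hC : finrank k S ≤ finrank k T + finrank k P' := by
    set F : ↥S →ₗ[k] Q ⧸ K := K.mkQ ∘ₗ ι ∘ₗ S.subtype with hF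
    have hrn := LinearMap.finrank_range_add_finrank_ker F
    have h1 : finrank k ↥(LinearMap.range F) ≤ finrank k P' := by
      apply Submodule.finrank_mono
      rintro _ ⟨x, rfl⟩
      refine ⟨ι (S.subtype x), ?_, rfl⟩
      exact hstabI.le x.2
    have h2 : finrank k ↥(LinearMap.ker F) ≤ finrank k T := by
      rw [← Submodule.finrank_map_subtype_eq S (LinearMap.ker F)]
      apply Submodule.finrank_mono
      rintro _ ⟨x, hx, rfl⟩
      simp only [hT, Submodule.mem_comap]
      have : F x = 0 := hx
      simp only [hF, LinearMap.comp_apply] at this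
      rwa [Submodule.mkQ_apply, Submodule.Quotient.mk_eq_zero] at this
    omega
  -- finrank P' + finrank K = finrank P
  have hPK : finrank k P' + finrank k K = finrank k P := by
    set G : ↥P →ₗ[k] Q ⧸ K := K.mkQ.domRestrict P with hG
    have hrn := LinearMap.finrank_range_add_finrank_ker G
    have h1 : LinearMap.range G = P' := by
      ext y
      constructor
      · rintro ⟨x, rfl⟩; exact ⟨x, x.2, rfl⟩
      · rintro ⟨x, hx, rfl⟩; exact ⟨⟨x, hx⟩, rfl⟩
    have h2 : finrank k ↥(LinearMap.ker G) = finrank k K := by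
      have : LinearMap.ker G = Submodule.comap P.subtype K := by
        ext x
        simp [hG, Submodule.Quotient.mk_eq_zero]
      rw [this, ← Submodule.finrank_map_subtype_eq P, Submodule.map_comap_subtype,
        inf_of_le_right hKP]
    rw [h1, h2] at hrn
    omega
  -- (D) finrank T + c ≤ m
  have hD : finrank k T + c ≤ m := by
    have hann : LinearMap.range ψ ≤ T.dualAnnihilator := by
      rintro _ ⟨s, rfl⟩
      rw [Submodule.mem_dualAnnihilator]
      intro v hv
      rw [hψ' s v]
      have hvK : φ (v : Q) = 0 := hv
      have := LinearMap.congr_fun hvK s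
      rw [hφ' (v : Q) s] at this
      simp only [LinearMap.zero_apply] at this
      have hskew : ξt ⁅s, (v : Q)⁆ = - ξt ⁅(v : Q), s⁆ := by
        rw [← lie_skew ((v : Q)) s, map_neg, neg_neg]
      rw [hskew, this, neg_zero]
    have h1 : finrank k ↥(LinearMap.range ψ) ≤ finrank k T.dualAnnihilator :=
      Submodule.finrank_mono hann
    have h2 : finrank k T.dualAnnihilator = finrank k (↥I ⧸ T) :=
      (LinearEquiv.finrank_eq (Subspace.quotEquivAnnihilator T)).symm
    have h3 : finrank k (↥I ⧸ T) + finrank k T = m :=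
      Submodule.finrank_quotient_add_finrank T
    have h4 : c = finrank k ↥(LinearMap.range ψ) := hξ₀.symm
    omega
  -- (E) rank-nullity for ψ
  have hE : finrank k ↥(LinearMap.range ψ) + finrank k P = n :=
    LinearMap.finrank_range_add_finrank_ker ψ
  have hE' : c + finrank k P = n := by rw [← hξ₀]; exact hE
  -- quotient dimension
  have hq : finrank k (Q ⧸ I) + m = n :=
    Submodule.finrank_quotient_add_finrank (I : Submodule k Q)
  -- rep index
  have hcm : c ≤ m := le_trans (le_add_self) hD
  have hrep : lieRepIndex k ρ = m - c := rfl
  have hrep' : lieRepIndex k ρ + c = m := by rw [hrep]; omega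
  omega
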